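/- If H is a k-uniform hypergraph with minimum degree at least k'/2 + 1 and girth at least 5 (in the sense of Berge), where k' ≤ k, then H is k'-detectable. -/

import Mathlib

/-- The Kneser graph `K(k,n)`: vertices are the `k`-subsets of `[n]`,
adjacent iff disjoint. -/
def Kneser (k n : ℕ) : SimpleGraph {s : Finset (Fin n) // s.card = k} :=
  SimpleGraph.fromRel (fun u v => Disjoint u.1 v.1)

/-- `S` is a resolving set of `G`. -/
def IsResolvingSet {V : Type*} (G : SimpleGraph V) (S : Set V) : Prop :=
  ∀ u v : V, (∀ s ∈ S, G.dist s u = G.dist s v) → u = v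

/-- Detection value of hyperedge `h` against a probe set `B`, for parameter `k`:
`0` if `h ∩ B = ∅`, `k` if `|h ∩ B| = k`, and `1` otherwise. -/
def detVal {V : Type*} [DecidableEq V] (k : ℕ) (h B : Finset V) : ℕ :=
  if (h ∩ B).card = 0 then 0 else if (h ∩ B).card = k then k else 1

/-- A hypergraph (edge set `E`) is `k'`-detectable (with detection parameter `k`):
distinct `k'`-sets of vertices yield distinct detection vectors. -/
def Detectable {V : Type*} [DecidableEq V] (k k' : ℕ) (E : Finset (Finset V)) : Prop :=
  ∀ B₁ B₂ : Finset V, B₁.card = k' → B₂.card = k' →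
    (∀ h ∈ E, detVal k h B₁ = detVal k h B₂) → B₁ = B₂

/-- Degree of a vertex in a hypergraph with edge set `E`. -/
def hdeg {V : Type*} [DecidableEq V] (E : Finset (Finset V)) (v : V) : ℕ :=
  (E.filter (fun h => v ∈ h)).card

/-- A hypergraph (edge set `E`) has Berge girth at least 5:
no Berge cycle of length 2, 3, or 4. -/
def GirthGe5 {V : Type*} (E : Finset (Finset V)) : Prop :=
  ∀ ℓ : ℕ, 2 ≤ ℓ → ℓ < 5 →
    ¬ ∃ (v : ZMod ℓ → V) (e : ZMod ℓ → Finset V),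
        Function.Injective v ∧ Function.Injective e ∧
        (∀ i, e i ∈ E) ∧ (∀ i : ZMod ℓ, v i ∈ e i ∧ v (i + 1) ∈ e i)


section helpers
set_option linter.unusedSectionVars false
variable {V : Type*} [DecidableEq V] {E : Finset (Finset V)}

lemma no2 (hg : GirthGe5 E) {e f : Finset V} {a b : V}
    (he : e ∈ E) (hf : f ∈ E) (hef : e ≠ f) (hab : a ≠ b)
    (hae : a ∈ e) (hbe : b ∈ e) (haf : a ∈ f) (hbf : b ∈ f) : False := by
  apply hg 2 (by norm_num) (by norm_num)
  refine ⟨fun i => if i = 0 then a else b, fun i => if i = 0 then e else f, ?_, ?_, ?_, ?_⟩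
  · intro i j hij
    have h2 : ∀ t : ZMod 2, t = 0 ∨ t = 1 := by decide
    rcases h2 i with rfl | rfl <;> rcases h2 j with rfl | rfl <;>
      simp_all (config := { decide := true })
  · intro i j hij
    have h2 : ∀ t : ZMod 2, t = 0 ∨ t = 1 := by decide
    rcases h2 i with rfl | rfl <;> rcases h2 j with rfl | rfl <;>
      simp_all (config := { decide := true })
  · intro i
    have h2 : ∀ t : ZMod 2, t = 0 ∨ t = 1 := by decide
    rcases h2 i with rfl | rfl <;> simp_all (config := { decide := true })
  · intro i
    have h2 : ∀ t : ZMod 2, t = 0 ∨ t = 1 := by decide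
    rcases h2 i with rfl | rfl <;>
      simp (config := { decide := true }) <;> simp_all (config := { decide := true })




lemma no3 (hg : GirthGe5 E) {p q r : Finset V} {a b c : V}
    (hp : p ∈ E) (hq : q ∈ E) (hr : r ∈ E)
    (hpq : p ≠ q) (hqr : q ≠ r) (hpr : p ≠ r)
    (hab : a ≠ b) (hbc : b ≠ c) (hac : a ≠ c)
    (hap : a ∈ p) (hbp : b ∈ p) (hbq : b ∈ q) (hcq : c ∈ q)
    (hcr : c ∈ r) (har : a ∈ r) : False := by
  apply hg 3 (by norm_num) (by norm_num)
  refine ⟨fun i => if i = 0 then a else if i = 1 then b else c,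
          fun i => if i = 0 then p else if i = 1 then q else r, ?_, ?_, ?_, ?_⟩
  · intro i j hij
    have h3 : ∀ t : ZMod 3, t = 0 ∨ t = 1 ∨ t = 2 := by decide
    rcases h3 i with rfl | rfl | rfl <;> rcases h3 j with rfl | rfl | rfl <;>
      simp_all (config := { decide := true })
  · intro i j hij
    have h3 : ∀ t : ZMod 3, t = 0 ∨ t = 1 ∨ t = 2 := by decide
    rcases h3 i with rfl | rfl | rfl <;> rcases h3 j with rfl | rfl | rfl <;>
      simp_all (config := { decide := true })
  · intro i
    have h3 : ∀ t : ZMod 3, t = 0 ∨ t = 1 ∨ t = 2 := by decide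
    rcases h3 i with rfl | rfl | rfl <;> simp_all (config := { decide := true })
  · intro i
    have h3 : ∀ t : ZMod 3, t = 0 ∨ t = 1 ∨ t = 2 := by decide
    rcases h3 i with rfl | rfl | rfl <;> simp_all (config := { decide := true })

lemma no4 (hg : GirthGe5 E) {p q r s : Finset V} {a b c d : V}
    (hp : p ∈ E) (hq : q ∈ E) (hr : r ∈ E) (hs : s ∈ E)
    (hpq : p ≠ q) (hpr : p ≠ r) (hps : p ≠ s) (hqr : q ≠ r) (hqs : q ≠ s) (hrs : r ≠ s)
    (hab : a ≠ b) (hac : a ≠ c) (had : a ≠ d) (hbc : b ≠ c) (hbd : b ≠ d) (hcd : c ≠ d)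
    (hap : a ∈ p) (hbp : b ∈ p) (hbq : b ∈ q) (hcq : c ∈ q)
    (hcr : c ∈ r) (hdr : d ∈ r) (hds : d ∈ s) (has : a ∈ s) : False := by
  apply hg 4 (by norm_num) (by norm_num)
  refine ⟨fun i => if i = 0 then a else if i = 1 then b else if i = 2 then c else d,
          fun i => if i = 0 then p else if i = 1 then q else if i = 2 then r else s,
          ?_, ?_, ?_, ?_⟩
  · intro i j hij
    have h4 : ∀ t : ZMod 4, t = 0 ∨ t = 1 ∨ t = 2 ∨ t = 3 := by decide
    rcases h4 i with rfl | rfl | rfl | rfl <;> rcases h4 j with rfl | rfl | rfl | rfl <;>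
      simp_all (config := { decide := true })
  · intro i j hij
    have h4 : ∀ t : ZMod 4, t = 0 ∨ t = 1 ∨ t = 2 ∨ t = 3 := by decide
    rcases h4 i with rfl | rfl | rfl | rfl <;> rcases h4 j with rfl | rfl | rfl | rfl <;>
      simp_all (config := { decide := true })
  · intro i
    have h4 : ∀ t : ZMod 4, t = 0 ∨ t = 1 ∨ t = 2 ∨ t = 3 := by decide
    rcases h4 i with rfl | rfl | rfl | rfl <;> simp_all (config := { decide := true })
  · intro i
    have h4 : ∀ t : ZMod 4, t = 0 ∨ t = 1 ∨ t = 2 ∨ t = 3 := by decide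
    rcases h4 i with rfl | rfl | rfl | rfl <;> simp_all (config := { decide := true })


lemma step (hg : GirthGe5 E) {B₂ : Finset V} {k' : ℕ}
    (hc2 : B₂.card = k')
    {x u : V} (hx2 : x ∉ B₂) (hu2 : u ∉ B₂) (hxu : x ≠ u)
    (hmeet : ∀ h ∈ E, x ∈ h → (h ∩ B₂).Nonempty)
    (hdx : k' + 2 ≤ 2 * (E.filter (fun h => x ∈ h)).card) :
    (B₂ \ B₂.filter (fun z => ∃ h ∈ E, x ∈ h ∧ z ∈ h)).card + 1
      ≤ (B₂ \ B₂.filter (fun z => ∃ h ∈ E, u ∈ h ∧ z ∈ h)).card := by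
  classical
  set Ex := E.filter (fun h => x ∈ h) with hExdef
  set Mx := B₂.filter (fun z => ∃ h ∈ E, x ∈ h ∧ z ∈ h) with hMxdef
  set Mu := B₂.filter (fun z => ∃ h ∈ E, u ∈ h ∧ z ∈ h) with hMudef
  have hExmem : ∀ e, e ∈ Ex ↔ e ∈ E ∧ x ∈ e := by
    intro e; rw [hExdef, Finset.mem_filter]
  -- pairwise disjoint traces
  have hdisj : ∀ e ∈ Ex, ∀ f ∈ Ex, e ≠ f → Disjoint (e ∩ B₂) (f ∩ B₂) := by
    intro e he f hf hef
    rw [Finset.disjoint_left]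
    intro z hze hzf
    rw [Finset.mem_inter] at hze hzf
    rw [hExmem] at he hf
    exact no2 hg he.1 hf.1 hef (fun hq => hx2 (by rw [hq]; exact hze.2)) he.2 hze.1 hf.2 hzf.1
  have hMxU : Mx = Ex.biUnion (fun e => e ∩ B₂) := by
    ext z
    simp only [hMxdef, hExdef, Finset.mem_filter, Finset.mem_biUnion, Finset.mem_inter]
    constructor
    · rintro ⟨hzB, h, hh, hxh, hzh⟩; exact ⟨h, ⟨hh, hxh⟩, hzh, hzB⟩
    · rintro ⟨h, ⟨hh, hxh⟩, hzh, hzB⟩; exact ⟨hzB, h, hh, hxh, hzh⟩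
  have hMxcard : Mx.card = ∑ e ∈ Ex, (e ∩ B₂).card := by
    rw [hMxU]; exact Finset.card_biUnion hdisj
  set Ex1 := Ex.filter (fun e => (e ∩ B₂).card = 1) with hEx1def
  have h2deg : 2 * Ex.card ≤ Mx.card + Ex1.card := by
    have hper : ∀ e ∈ Ex, 2 ≤ (e ∩ B₂).card + (if (e ∩ B₂).card = 1 then 1 else 0) := by
      intro e he
      rw [hExmem] at he
      have hne := Finset.card_pos.mpr (hmeet e he.1 he.2)
      split_ifs with h1 <;> omega
    calc 2 * Ex.card = ∑ _e ∈ Ex, 2 := by rw [Finset.sum_const, smul_eq_mul, mul_comm]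
    _ ≤ ∑ e ∈ Ex, ((e ∩ B₂).card + (if (e ∩ B₂).card = 1 then 1 else 0)) :=
        Finset.sum_le_sum hper
    _ = Mx.card + Ex1.card := by
        rw [Finset.sum_add_distrib, hMxcard, hEx1def, Finset.card_filter]
  have hMxsub : Mx ⊆ B₂ := Finset.filter_subset _ _
  have hMxn : Mx.card + (B₂ \ Mx).card = k' := by
    have := Finset.card_sdiff_add_card_eq_card hMxsub
    omega
  have hEx1card : (B₂ \ Mx).card + 2 ≤ Ex1.card := by omega
  -- pendant vertices
  set P := Ex1.biUnion (fun e => e ∩ B₂) with hPdef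
  have hPsub : P ⊆ B₂ := by
    intro z hz
    rw [hPdef, Finset.mem_biUnion] at hz
    obtain ⟨e, _, hze⟩ := hz
    exact (Finset.mem_inter.mp hze).2
  have hPcard : P.card = Ex1.card := by
    rw [hPdef, Finset.card_biUnion (fun e he f hf hef =>
      hdisj e (Finset.filter_subset _ _ he) f (Finset.filter_subset _ _ hf) hef)]
    rw [Finset.sum_congr rfl (fun e he => (Finset.mem_filter.mp he).2)]
    simp
    rfl
  have hPmem : ∀ z ∈ P, z ∈ B₂ ∧ ∃ e, e ∈ E ∧ x ∈ e ∧ z ∈ e ∧ (e ∩ B₂).card = 1 := by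
    intro z hz
    refine ⟨hPsub hz, ?_⟩
    rw [hPdef, Finset.mem_biUnion] at hz
    obtain ⟨e, he, hze⟩ := hz
    rw [hEx1def, Finset.mem_filter, hExmem] at he
    exact ⟨e, he.1.1, he.1.2, (Finset.mem_inter.mp hze).1, he.2⟩
  -- T8 : no edge contains two distinct pendant vertices
  have T8 : ∀ z ∈ P, ∀ z' ∈ P, z ≠ z' → ∀ h ∈ E, z ∈ h → z' ∈ h → False := by
    intro z hz z' hz' hzz h hh hzh hz'h
    obtain ⟨hzB, e, heE, hxe, hze, hec⟩ := hPmem z hz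
    obtain ⟨hz'B, e', he'E, hxe', hz'e', he'c⟩ := hPmem z' hz'
    have hz'e : z' ∉ e := by
      intro hmem
      exact hzz (Finset.card_le_one.mp (le_of_eq hec) z (Finset.mem_inter.mpr ⟨hze, hzB⟩)
        z' (Finset.mem_inter.mpr ⟨hmem, hz'B⟩))
    have hze' : z ∉ e' := by
      intro hmem
      exact hzz ((Finset.card_le_one.mp (le_of_eq he'c) z' (Finset.mem_inter.mpr ⟨hz'e', hz'B⟩)
        z (Finset.mem_inter.mpr ⟨hmem, hzB⟩)).symm)
    have hee' : e ≠ e' := fun hq => hz'e (hq ▸ hz'e')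
    have hxz : x ≠ z := fun hq => hx2 (hq ▸ hzB)
    have hxz' : x ≠ z' := fun hq => hx2 (hq ▸ hz'B)
    have hhe : h ≠ e := fun hq => hz'e (hq ▸ hz'h)
    have hhe' : h ≠ e' := fun hq => hze' (hq ▸ hzh)
    exact no3 hg heE hh he'E hhe.symm hhe' hee' hxz hzz hxz' hxe hze hzh hz'h hz'e' hxe'
  -- T11 : any u distinct from x is coedged with at most one pendant vertex of x
  have T11 : (P ∩ Mu).card ≤ 1 := by
    by_contra hgt
    obtain ⟨z, hz, z', hz', hzz⟩ := Finset.one_lt_card.mp (lt_of_not_ge hgt)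
    rw [Finset.mem_inter] at hz hz'
    obtain ⟨hzP, hzMu⟩ := hz
    obtain ⟨hz'P, hz'Mu⟩ := hz'
    obtain ⟨hzB, e, heE, hxe, hze, hec⟩ := hPmem z hzP
    obtain ⟨hz'B, e', he'E, hxe', hz'e', he'c⟩ := hPmem z' hz'P
    rw [hMudef, Finset.mem_filter] at hzMu hz'Mu
    obtain ⟨-, h, hhE, huh, hzh⟩ := hzMu
    obtain ⟨-, h', hh'E, huh', hz'h'⟩ := hz'Mu
    -- basic distinctness
    have hz'e : z' ∉ e := by
      intro hmem
      exact hzz (Finset.card_le_one.mp (le_of_eq hec) z (Finset.mem_inter.mpr ⟨hze, hzB⟩)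
        z' (Finset.mem_inter.mpr ⟨hmem, hz'B⟩))
    have hze' : z ∉ e' := by
      intro hmem
      exact hzz ((Finset.card_le_one.mp (le_of_eq he'c) z' (Finset.mem_inter.mpr ⟨hz'e', hz'B⟩)
        z (Finset.mem_inter.mpr ⟨hmem, hzB⟩)).symm)
    have hee' : e ≠ e' := fun hq => hz'e (hq ▸ hz'e')
    have hxz : x ≠ z := fun hq => hx2 (by rw [hq]; exact hzB)
    have hxz' : x ≠ z' := fun hq => hx2 (by rw [hq]; exact hz'B)
    have huz : u ≠ z := fun hq => hu2 (by rw [hq]; exact hzB)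
    have huz' : u ≠ z' := fun hq => hu2 (by rw [hq]; exact hz'B)
    -- no edge contains both z and z' (T8)
    have hz'h : z' ∉ h := fun hc => T8 z hzP z' hz'P hzz h hhE hzh hc
    have hzh' : z ∉ h' := fun hc => T8 z hzP z' hz'P hzz h' hh'E hc hz'h'
    -- u is not in both pendant edges
    by_cases hue : u ∈ e
    · by_cases hue' : u ∈ e'
      · exact no2 hg heE he'E hee' hxu hxe hue hxe' hue'
      · -- triangle x, z', u with edges e', h', e
        have h1 : e' ≠ h' := fun hq => hue' (hq ▸ huh')
        have h2 : h' ≠ e := fun hq => hz'e (hq ▸ hz'h')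
        exact no3 hg he'E hh'E heE h1 h2 hee'.symm hxz' (fun hq => huz' hq.symm) hxu
          hxe' hz'e' hz'h' huh' hue hxe
    · by_cases hue' : u ∈ e'
      · -- triangle x, z, u with edges e, h, e'
        have h1 : e ≠ h := fun hq => hue (hq ▸ huh)
        have h2 : h ≠ e' := fun hq => hze' (hq ▸ hzh)
        exact no3 hg heE hhE he'E h1 h2 hee' hxz (fun hq => huz hq.symm) hxu
          hxe hze hzh huh hue' hxe'
      · -- four-cycle x, z, u, z' with edges e, h, h', e'
        have h1 : e ≠ h := fun hq => hue (hq ▸ huh)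
        have h2 : e ≠ h' := fun hq => hue (hq ▸ huh')
        have h3 : h ≠ h' := fun hq => hzh' (hq ▸ hzh)
        have h4 : h ≠ e' := fun hq => hue' (hq ▸ huh)
        have h5 : h' ≠ e' := fun hq => hue' (hq ▸ huh')
        exact no4 hg heE hhE hh'E he'E h1 h2 hee' h3 h4 h5
          hxz hxu hxz' huz.symm hzz huz'
          hxe hze hzh huh huh' hz'h' hz'e' hxe'
  -- conclude
  have hq1 : (P \ Mu).card + (P ∩ Mu).card = P.card := Finset.card_sdiff_add_card_inter P Mu
  have hq2 : (P \ Mu).card ≤ (B₂ \ Mu).card :=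
    Finset.card_le_card (Finset.sdiff_subset_sdiff hPsub (le_refl Mu))
  omega




lemma caseOne (hg : GirthGe5 E) {B₁ B₂ : Finset V} {k' : ℕ}
    (hCcard : (B₁ ∩ B₂).card + 1 = k')
    {x y : V} (hx1 : x ∈ B₁) (hx2 : x ∉ B₂) (hy2 : y ∈ B₂) (hy1 : y ∉ B₁)
    (huniq2 : ∀ z ∈ B₂, z ≠ y → z ∈ B₁)
    (huniq1 : ∀ z ∈ B₁, z ≠ x → z ∈ B₂)
    (hmx : ∀ h ∈ E, x ∈ h → (h ∩ B₂).Nonempty)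
    (hmy : ∀ h ∈ E, y ∈ h → (h ∩ B₁).Nonempty)
    (hdx : k' + 2 ≤ 2 * (E.filter (fun h => x ∈ h)).card)
    (hdy : k' + 2 ≤ 2 * (E.filter (fun h => y ∈ h)).card) : False := by
  classical
  set C := B₁ ∩ B₂ with hCdef
  have hxy : x ≠ y := fun hq => hy1 (hq ▸ hx1)
  set Ex := E.filter (fun h => x ∈ h) with hExdef
  set Ey := E.filter (fun h => y ∈ h) with hEydef
  have hExmem : ∀ e, e ∈ Ex ↔ e ∈ E ∧ x ∈ e := by
    intro e; rw [hExdef, Finset.mem_filter]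
  have hEymem : ∀ e, e ∈ Ey ↔ e ∈ E ∧ y ∈ e := by
    intro e; rw [hEydef, Finset.mem_filter]
  have hdisjx : ∀ e ∈ Ex, ∀ f ∈ Ex, e ≠ f → Disjoint (e ∩ B₂) (f ∩ B₂) := by
    intro e he f hf hef
    rw [Finset.disjoint_left]
    intro z hze hzf
    rw [Finset.mem_inter] at hze hzf
    rw [hExmem] at he hf
    exact no2 hg he.1 hf.1 hef (fun hq => hx2 (by rw [hq]; exact hze.2)) he.2 hze.1 hf.2 hzf.1
  have hdisjy : ∀ e ∈ Ey, ∀ f ∈ Ey, e ≠ f → Disjoint (e ∩ B₁) (f ∩ B₁) := by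
    intro e he f hf hef
    rw [Finset.disjoint_left]
    intro z hze hzf
    rw [Finset.mem_inter] at hze hzf
    rw [hEymem] at he hf
    exact no2 hg he.1 hf.1 hef (fun hq => hy1 (by rw [hq]; exact hze.2)) he.2 hze.1 hf.2 hzf.1
  by_cases hco : ∃ g ∈ E, x ∈ g ∧ y ∈ g
  · obtain ⟨g, hgE, hxg, hyg⟩ := hco
    have hgEx : g ∈ Ex := (hExmem g).mpr ⟨hgE, hxg⟩
    have hgEy : g ∈ Ey := (hEymem g).mpr ⟨hgE, hyg⟩
    set Sx := (Ex.erase g).biUnion (fun e => e ∩ B₂) with hSxdef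
    set Sy := (Ey.erase g).biUnion (fun e => e ∩ B₁) with hSydef
    have hSxC : Sx ⊆ C := by
      intro z hz
      rw [hSxdef, Finset.mem_biUnion] at hz
      obtain ⟨e, he, hze⟩ := hz
      have heg : e ≠ g := Finset.ne_of_mem_erase he
      have heEx := (hExmem e).mp (Finset.mem_of_mem_erase he)
      rw [Finset.mem_inter] at hze
      have hzy : z ≠ y := by
        rintro rfl
        exact no2 hg heEx.1 hgE heg hxy heEx.2 hze.1 hxg hyg
      rw [hCdef, Finset.mem_inter]
      exact ⟨huniq2 z hze.2 hzy, hze.2⟩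
    have hSyC : Sy ⊆ C := by
      intro z hz
      rw [hSydef, Finset.mem_biUnion] at hz
      obtain ⟨e, he, hze⟩ := hz
      have heg : e ≠ g := Finset.ne_of_mem_erase he
      have heEy := (hEymem e).mp (Finset.mem_of_mem_erase he)
      rw [Finset.mem_inter] at hze
      have hzx : z ≠ x := by
        rintro rfl
        exact no2 hg heEy.1 hgE heg hxy.symm heEy.2 hze.1 hyg hxg
      rw [hCdef, Finset.mem_inter]
      exact ⟨hze.2, huniq1 z hze.2 hzx⟩
    have hSxcard : Ex.card ≤ Sx.card + 1 := by
      have h1 : Sx.card = ∑ e ∈ Ex.erase g, (e ∩ B₂).card := by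
        rw [hSxdef]
        exact Finset.card_biUnion (fun e he f hf hef =>
          hdisjx e (Finset.mem_of_mem_erase he) f (Finset.mem_of_mem_erase hf) hef)
      have h2 : ∀ e ∈ Ex.erase g, 1 ≤ (e ∩ B₂).card := by
        intro e he
        have heEx := (hExmem e).mp (Finset.mem_of_mem_erase he)
        exact Finset.card_pos.mpr (hmx e heEx.1 heEx.2)
      have h3 : (Ex.erase g).card ≤ ∑ e ∈ Ex.erase g, (e ∩ B₂).card := by
        calc (Ex.erase g).card = ∑ _e ∈ Ex.erase g, 1 := by simp
        _ ≤ _ := Finset.sum_le_sum h2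
      have h4 : (Ex.erase g).card = Ex.card - 1 := Finset.card_erase_of_mem hgEx
      have h5 : 1 ≤ Ex.card := Finset.card_pos.mpr ⟨g, hgEx⟩
      omega
    have hSycard : Ey.card ≤ Sy.card + 1 := by
      have h1 : Sy.card = ∑ e ∈ Ey.erase g, (e ∩ B₁).card := by
        rw [hSydef]
        exact Finset.card_biUnion (fun e he f hf hef =>
          hdisjy e (Finset.mem_of_mem_erase he) f (Finset.mem_of_mem_erase hf) hef)
      have h2 : ∀ e ∈ Ey.erase g, 1 ≤ (e ∩ B₁).card := by
        intro e he
        have heEy := (hEymem e).mp (Finset.mem_of_mem_erase he)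
        exact Finset.card_pos.mpr (hmy e heEy.1 heEy.2)
      have h3 : (Ey.erase g).card ≤ ∑ e ∈ Ey.erase g, (e ∩ B₁).card := by
        calc (Ey.erase g).card = ∑ _e ∈ Ey.erase g, 1 := by simp
        _ ≤ _ := Finset.sum_le_sum h2
      have h4 : (Ey.erase g).card = Ey.card - 1 := Finset.card_erase_of_mem hgEy
      have h5 : 1 ≤ Ey.card := Finset.card_pos.mpr ⟨g, hgEy⟩
      omega
    have hdisjSS : Disjoint Sx Sy := by
      rw [Finset.disjoint_left]
      intro z hzx hzy'
      rw [hSxdef, Finset.mem_biUnion] at hzx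
      rw [hSydef, Finset.mem_biUnion] at hzy'
      obtain ⟨e, he, hze⟩ := hzx
      obtain ⟨f, hf, hzf⟩ := hzy'
      have heg : e ≠ g := Finset.ne_of_mem_erase he
      have hfg : f ≠ g := Finset.ne_of_mem_erase hf
      have heEx := (hExmem e).mp (Finset.mem_of_mem_erase he)
      have hfEy := (hEymem f).mp (Finset.mem_of_mem_erase hf)
      rw [Finset.mem_inter] at hze hzf
      have hzx' : x ≠ z := fun hq => hx2 (by rw [hq]; exact hze.2)
      have hzy'' : z ≠ y := fun hq => hy1 (by rw [← hq]; exact hzf.2)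
      by_cases hef : e = f
      · subst hef
        exact no2 hg heEx.1 hgE heg hxy heEx.2 hfEy.2 hxg hyg
      · exact no3 hg heEx.1 hfEy.1 hgE hef hfg heg hzx' hzy'' hxy
          heEx.2 hze.1 hzf.1 hfEy.2 hyg hxg
    have hunion : Sx.card + Sy.card ≤ C.card := by
      rw [← Finset.card_union_of_disjoint hdisjSS]
      exact Finset.card_le_card (Finset.union_subset hSxC hSyC)
    omega
  · push_neg at hco
    set Sx := Ex.biUnion (fun e => e ∩ B₂) with hSxdef
    set Sy := Ey.biUnion (fun e => e ∩ B₁) with hSydef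
    have hSxC : Sx ⊆ C := by
      intro z hz
      rw [hSxdef, Finset.mem_biUnion] at hz
      obtain ⟨e, he, hze⟩ := hz
      have heEx := (hExmem e).mp he
      rw [Finset.mem_inter] at hze
      have hzy : z ≠ y := by
        rintro rfl
        exact hco e heEx.1 heEx.2 hze.1
      rw [hCdef, Finset.mem_inter]
      exact ⟨huniq2 z hze.2 hzy, hze.2⟩
    have hSyC : Sy ⊆ C := by
      intro z hz
      rw [hSydef, Finset.mem_biUnion] at hz
      obtain ⟨e, he, hze⟩ := hz
      have heEy := (hEymem e).mp he
      rw [Finset.mem_inter] at hze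
      have hzx : z ≠ x := by
        rintro rfl
        exact hco e heEy.1 hze.1 heEy.2
      rw [hCdef, Finset.mem_inter]
      exact ⟨hze.2, huniq1 z hze.2 hzx⟩
    have hSxcard : Ex.card ≤ Sx.card := by
      have h1 : Sx.card = ∑ e ∈ Ex, (e ∩ B₂).card := by
        rw [hSxdef]; exact Finset.card_biUnion hdisjx
      have h2 : ∀ e ∈ Ex, 1 ≤ (e ∩ B₂).card := by
        intro e he
        have heEx := (hExmem e).mp he
        exact Finset.card_pos.mpr (hmx e heEx.1 heEx.2)
      calc Ex.card = ∑ _e ∈ Ex, 1 := by simp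
      _ ≤ ∑ e ∈ Ex, (e ∩ B₂).card := Finset.sum_le_sum h2
      _ = Sx.card := h1.symm
    have hSycard : Ey.card ≤ Sy.card := by
      have h1 : Sy.card = ∑ e ∈ Ey, (e ∩ B₁).card := by
        rw [hSydef]; exact Finset.card_biUnion hdisjy
      have h2 : ∀ e ∈ Ey, 1 ≤ (e ∩ B₁).card := by
        intro e he
        have heEy := (hEymem e).mp he
        exact Finset.card_pos.mpr (hmy e heEy.1 heEy.2)
      calc Ey.card = ∑ _e ∈ Ey, 1 := by simp
      _ ≤ ∑ e ∈ Ey, (e ∩ B₁).card := Finset.sum_le_sum h2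
      _ = Sy.card := h1.symm
    have hint : (Sx ∩ Sy).card ≤ 1 := by
      by_contra hgt
      obtain ⟨z, hz, z', hz', hzz⟩ := Finset.one_lt_card.mp (lt_of_not_ge hgt)
      rw [Finset.mem_inter] at hz hz'
      obtain ⟨hzSx, hzSy⟩ := hz
      obtain ⟨hz'Sx, hz'Sy⟩ := hz'
      rw [hSxdef, Finset.mem_biUnion] at hzSx hz'Sx
      rw [hSydef, Finset.mem_biUnion] at hzSy hz'Sy
      obtain ⟨e, he, hze⟩ := hzSx
      obtain ⟨f, hf, hzf⟩ := hzSy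
      obtain ⟨e', he', hz'e'⟩ := hz'Sx
      obtain ⟨f', hf', hz'f'⟩ := hz'Sy
      have heEx := (hExmem e).mp he
      have he'Ex := (hExmem e').mp he'
      have hfEy := (hEymem f).mp hf
      have hf'Ey := (hEymem f').mp hf'
      rw [Finset.mem_inter] at hze hzf hz'e' hz'f'
      have hzB1 : z ∈ B₁ := (Finset.mem_inter.mp (hSyC (by
        rw [hSydef, Finset.mem_biUnion]; exact ⟨f, hf, Finset.mem_inter.mpr hzf⟩))).1
      have hz'B1 : z' ∈ B₁ := (Finset.mem_inter.mp (hSyC (by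
        rw [hSydef, Finset.mem_biUnion]; exact ⟨f', hf', Finset.mem_inter.mpr hz'f'⟩))).1
      have hxz : x ≠ z := fun hq => hx2 (by rw [hq]; exact hze.2)
      have hxz' : x ≠ z' := fun hq => hx2 (by rw [hq]; exact hz'e'.2)
      have hyz : z ≠ y := fun hq => hy1 (by rw [← hq]; exact hzB1)
      have hyz' : z' ≠ y := fun hq => hy1 (by rw [← hq]; exact hz'B1)
      have hef : e ≠ f := fun hq => hco e heEx.1 heEx.2 (hq ▸ hfEy.2)
      have hef' : e ≠ f' := fun hq => hco e heEx.1 heEx.2 (hq ▸ hf'Ey.2)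
      have he'f : e' ≠ f := fun hq => hco e' he'Ex.1 he'Ex.2 (hq ▸ hfEy.2)
      have he'f' : e' ≠ f' := fun hq => hco e' he'Ex.1 he'Ex.2 (hq ▸ hf'Ey.2)
      by_cases hee' : e = e'
      · by_cases hff' : f = f'
        · subst hee'; subst hff'
          exact no2 hg heEx.1 hfEy.1 hef hzz hze.1 hz'e'.1 hzf.1 hz'f'.1
        · subst hee'
          exact no3 hg hfEy.1 hf'Ey.1 heEx.1 hff' he'f'.symm hef.symm
            hyz hyz'.symm hzz hzf.1 hfEy.2 hf'Ey.2 hz'f'.1 hz'e'.1 hze.1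
      · by_cases hff' : f = f'
        · subst hff'
          exact no3 hg heEx.1 he'Ex.1 hfEy.1 hee' he'f hef
            hxz.symm hxz' hzz hze.1 heEx.2 he'Ex.2 hz'e'.1 hz'f'.1 hzf.1
        · exact no4 hg heEx.1 hfEy.1 hf'Ey.1 he'Ex.1 hef hef' hee' hff' he'f.symm he'f'.symm
            hxz hxy hxz' hyz hzz hyz'.symm
            heEx.2 hze.1 hzf.1 hfEy.2 hf'Ey.2 hz'f'.1 hz'e'.1 he'Ex.2
    have hunion : Sx.card + Sy.card ≤ C.card + 1 := by
      have := Finset.card_union_add_card_inter Sx Sy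
      have h2 : (Sx ∪ Sy).card ≤ C.card :=
        Finset.card_le_card (Finset.union_subset hSxC hSyC)
      omega
    omega


end helpers

theorem stmt_7 {V : Type*} [DecidableEq V] (k k' : ℕ) (hk' : k' ≤ k)
    (E : Finset (Finset V)) (hunif : ∀ h ∈ E, h.card = k)
    (hdeg : ∀ v : V, ((hdeg E v : ℚ)) ≥ (k' : ℚ) / 2 + 1)
    (hgirth : GirthGe5 E) :
    Detectable k k' E := by
  classical
  intro B₁ B₂ hc1 hc2 hvec
  by_contra hne
  have hk'pos : 0 < k' := by
    by_contra h0
    apply hne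
    have h1 : B₁ = ∅ := Finset.card_eq_zero.mp (by omega)
    have h2 : B₂ = ∅ := Finset.card_eq_zero.mp (by omega)
    rw [h1, h2]
  have hkpos : 0 < k := lt_of_lt_of_le hk'pos hk'
  have hmeet : ∀ h ∈ E, (h ∩ B₁).Nonempty → (h ∩ B₂).Nonempty := by
    intro h hh hS
    by_contra hT
    have h1 : 0 < (h ∩ B₁).card := Finset.card_pos.mpr hS
    have h2 : (h ∩ B₂).card = 0 := by
      rw [Finset.card_eq_zero]; exact Finset.not_nonempty_iff_eq_empty.mp hT
    have hd := hvec h hh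
    unfold detVal at hd
    split_ifs at hd <;> omega
  have hmeet' : ∀ h ∈ E, (h ∩ B₂).Nonempty → (h ∩ B₁).Nonempty := by
    intro h hh hS
    by_contra hT
    have h1 : 0 < (h ∩ B₂).card := Finset.card_pos.mpr hS
    have h2 : (h ∩ B₁).card = 0 := by
      rw [Finset.card_eq_zero]; exact Finset.not_nonempty_iff_eq_empty.mp hT
    have hd := (hvec h hh).symm
    unfold detVal at hd
    split_ifs at hd <;> omega
  have hdeg2 : ∀ v : V, k' + 2 ≤ 2 * (E.filter (fun h => v ∈ h)).card := by
    intro v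
    show k' + 2 ≤ 2 * _root_.hdeg E v
    have h := hdeg v
    rw [ge_iff_le] at h
    have h2 : ((k' : ℚ) + 2) ≤ 2 * (_root_.hdeg E v : ℚ) := by linarith
    exact_mod_cast h2
  have hA : (B₁ \ B₂).Nonempty := by
    rw [Finset.sdiff_nonempty]
    intro hsub
    exact hne (Finset.eq_of_subset_of_card_le hsub (le_of_eq (hc2.trans hc1.symm)))
  have hcard12 : (B₁ \ B₂).card = (B₂ \ B₁).card := by
    have h1 := Finset.card_sdiff_add_card_inter B₁ B₂
    have h2 := Finset.card_sdiff_add_card_inter B₂ B₁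
    rw [Finset.inter_comm] at h2
    omega
  by_cases hd1 : (B₁ \ B₂).card = 1
  · obtain ⟨x, hxe⟩ := Finset.card_eq_one.mp hd1
    have hd1' : (B₂ \ B₁).card = 1 := by omega
    obtain ⟨y, hye⟩ := Finset.card_eq_one.mp hd1'
    have hx : x ∈ B₁ \ B₂ := by rw [hxe]; exact Finset.mem_singleton_self x
    have hy : y ∈ B₂ \ B₁ := by rw [hye]; exact Finset.mem_singleton_self y
    rw [Finset.mem_sdiff] at hx hy
    have hCcard : (B₁ ∩ B₂).card + 1 = k' := by
      have := Finset.card_sdiff_add_card_inter B₁ B₂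
      omega
    have huniq2 : ∀ z ∈ B₂, z ≠ y → z ∈ B₁ := by
      intro z hz hzy
      by_contra hz1
      have hmem : z ∈ B₂ \ B₁ := Finset.mem_sdiff.mpr ⟨hz, hz1⟩
      rw [hye, Finset.mem_singleton] at hmem
      exact hzy hmem
    have huniq1 : ∀ z ∈ B₁, z ≠ x → z ∈ B₂ := by
      intro z hz hzx
      by_contra hz1
      have hmem : z ∈ B₁ \ B₂ := Finset.mem_sdiff.mpr ⟨hz, hz1⟩
      rw [hxe, Finset.mem_singleton] at hmem
      exact hzx hmem
    exact caseOne hgirth hCcard hx.1 hx.2 hy.1 hy.2 huniq2 huniq1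
      (fun h hh hxh => hmeet h hh ⟨x, Finset.mem_inter.mpr ⟨hxh, hx.1⟩⟩)
      (fun h hh hyh => hmeet' h hh ⟨y, Finset.mem_inter.mpr ⟨hyh, hy.1⟩⟩)
      (hdeg2 x) (hdeg2 y)
  · have h2le : 2 ≤ (B₁ \ B₂).card := by
      have := Finset.card_pos.mpr hA
      omega
    obtain ⟨x, hx, u, hu, hxu⟩ := Finset.one_lt_card.mp h2le
    rw [Finset.mem_sdiff] at hx hu
    have s1 := step hgirth hc2 hx.2 hu.2 hxu
      (fun h hh hxh => hmeet h hh ⟨x, Finset.mem_inter.mpr ⟨hxh, hx.1⟩⟩) (hdeg2 x)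
    have s2 := step hgirth hc2 hu.2 hx.2 hxu.symm
      (fun h hh huh => hmeet h hh ⟨u, Finset.mem_inter.mpr ⟨huh, hu.1⟩⟩) (hdeg2 u)
    omega
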